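/- Let f_n = Σ_{k=0}^n C(n,k)^3 be the Franel numbers, let α be an integer, and define v_n(α) = Σ_{k=0}^n C(n,k)·(-α)^{n-k}·f_k. Then the sequence (v_n(α))_{n≥0} satisfies the Gauss congruences: for every prime p and all positive integers n and r, v_{n·p^r}(α) ≡ v_{n·p^{r-1}}(α) (mod p^r). -/

import Mathlib

/-- The Franel numbers `fₙ = ∑ₖ C(n,k)³`. -/
def franel (n : ℕ) : ℤ :=
  ∑ k ∈ Finset.range (n + 1), (n.choose k : ℤ) ^ 3

/-- The binomial transform of an integer sequence `u` at `α`. -/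
def binomialTransform (u : ℕ → ℤ) (α : ℤ) (n : ℕ) : ℤ :=
  ∑ k ∈ Finset.range (n + 1), (n.choose k : ℤ) * (-α) ^ (n - k) * u k

set_option linter.unusedSectionVars false

namespace FranelGauss

open Finsupp AddMonoidAlgebra Finset

abbrev G : Type := ℤ × ℤ
abbrev R : Type := AddMonoidAlgebra ℤ G

noncomputable def Pf : R :=
  (1 + AddMonoidAlgebra.single ((1 : ℤ), (0 : ℤ)) (1 : ℤ)) *
  (1 + AddMonoidAlgebra.single ((0 : ℤ), (1 : ℤ)) (1 : ℤ)) *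
  (1 + AddMonoidAlgebra.single ((-1 : ℤ), (-1 : ℤ)) (1 : ℤ))

lemma one_add_single_pow (g : G) (n : ℕ) :
    (1 + AddMonoidAlgebra.single g (1 : ℤ)) ^ n
      = ∑ k ∈ Finset.range (n + 1), AddMonoidAlgebra.single (k • g) ((n.choose k : ℤ)) := by
  rw [add_comm, add_pow]
  refine Finset.sum_congr rfl fun k _ => ?_
  rw [AddMonoidAlgebra.single_pow, one_pow, one_pow, mul_one,
    AddMonoidAlgebra.natCast_def, AddMonoidAlgebra.single_mul_single, add_zero, one_mul]

lemma ct_Pf_pow (n : ℕ) : (Pf ^ n).coeff 0 = franel n := by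
  have h : Pf ^ n =
      ∑ a ∈ Finset.range (n + 1), ∑ b ∈ Finset.range (n + 1), ∑ c ∈ Finset.range (n + 1),
        AddMonoidAlgebra.single (a • ((1 : ℤ), (0 : ℤ)) + b • ((0 : ℤ), (1 : ℤ))
            + c • ((-1 : ℤ), (-1 : ℤ)))
          ((n.choose a : ℤ) * (n.choose b : ℤ) * (n.choose c : ℤ)) := by
    rw [Pf, mul_pow, mul_pow, one_add_single_pow, one_add_single_pow, one_add_single_pow,
      Finset.sum_mul_sum, Finset.sum_mul]
    refine Finset.sum_congr rfl fun a _ => ?_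
    rw [Finset.sum_mul]
    refine Finset.sum_congr rfl fun b _ => ?_
    rw [AddMonoidAlgebra.single_mul_single, Finset.mul_sum]
    refine Finset.sum_congr rfl fun c _ => ?_
    rw [AddMonoidAlgebra.single_mul_single]
  rw [h, franel, AddMonoidAlgebra.coeff_sum, Finset.sum_apply']
  refine Finset.sum_congr rfl fun a ha => ?_
  rw [AddMonoidAlgebra.coeff_sum, Finset.sum_apply']
  have step1 : ∀ b ∈ Finset.range (n + 1),
      (∑ c ∈ Finset.range (n + 1),
        AddMonoidAlgebra.single (a • ((1 : ℤ), (0 : ℤ)) + b • ((0 : ℤ), (1 : ℤ))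
            + c • ((-1 : ℤ), (-1 : ℤ)))
          ((n.choose a : ℤ) * (n.choose b : ℤ) * (n.choose c : ℤ))).coeff 0
      = if b = a then (n.choose a : ℤ) * (n.choose b : ℤ) * (n.choose a : ℤ) else 0 := by
    intro b hb
    rw [AddMonoidAlgebra.coeff_sum, Finset.sum_apply']
    have step2 : ∀ c ∈ Finset.range (n + 1),
        (AddMonoidAlgebra.single (a • ((1 : ℤ), (0 : ℤ)) + b • ((0 : ℤ), (1 : ℤ))
            + c • ((-1 : ℤ), (-1 : ℤ)))
          ((n.choose a : ℤ) * (n.choose b : ℤ) * (n.choose c : ℤ))).coeff 0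
        = if c = a then (if b = a then (n.choose a : ℤ) * (n.choose b : ℤ) * (n.choose c : ℤ)
            else 0) else 0 := by
      intro c hc
      rw [AddMonoidAlgebra.coeff_single, Finsupp.single_apply, ← ite_and]
      congr 1
      have hval : a • ((1 : ℤ), (0 : ℤ)) + b • ((0 : ℤ), (1 : ℤ)) + c • ((-1 : ℤ), (-1 : ℤ))
          = (((a : ℤ) - c, (b : ℤ) - c) : G) := by
        rw [Prod.ext_iff]
        constructor <;>
          simp only [Prod.smul_mk, Prod.fst_add, Prod.snd_add, Prod.fst, Prod.snd,
            nsmul_eq_mul] <;> ring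
      rw [hval]
      simp only [Prod.mk_eq_zero, sub_eq_zero, Nat.cast_inj, eq_iff_iff]
      constructor
      · rintro ⟨h1, h2⟩; omega
      · rintro ⟨h1, h2⟩; omega
    rw [Finset.sum_congr rfl step2, Finset.sum_ite_eq' (Finset.range (n+1)) a]
    simp [Finset.mem_range.mp ha]
  rw [Finset.sum_congr rfl step1, Finset.sum_ite_eq' (Finset.range (n+1)) a]
  simp [Finset.mem_range.mp ha]
  ring


variable (p : ℕ)

/-- multiplication by `p` on exponents, as an `AddMonoidHom`. -/
def psmul : G →+ G where
  toFun g := p • g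
  map_zero' := smul_zero p
  map_add' a b := smul_add p a b

/-- The expansion (dilation) ring homomorphism on `ℤ[G]`. -/
noncomputable def E : R →+* R := AddMonoidAlgebra.mapDomainRingHom ℤ (psmul p)

abbrev S : Type := AddMonoidAlgebra (ZMod p) G

/-- The expansion ring homomorphism on `(ZMod p)[G]`. -/
noncomputable def ES : S p →+* S p := AddMonoidAlgebra.mapDomainRingHom (ZMod p) (psmul p)

/-- Reduction mod `p` of coefficients, as a ring hom. -/
noncomputable def red : R →+* S p :=
  AddMonoidAlgebra.liftNCRingHom
    ((AddMonoidAlgebra.singleZeroRingHom : ZMod p →+* S p).comp (Int.castRingHom (ZMod p)))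
    (AddMonoidAlgebra.of (ZMod p) G) (fun _ _ => Commute.all _ _)

lemma red_single (g : G) (c : ℤ) :
    red p (AddMonoidAlgebra.single g c) = AddMonoidAlgebra.single g (c : ZMod p) := by
  rw [red, AddMonoidAlgebra.liftNCRingHom]
  show AddMonoidAlgebra.liftNC _ _ (AddMonoidAlgebra.single g c) = _
  rw [AddMonoidAlgebra.liftNC_single]
  show AddMonoidAlgebra.single 0 ((c : ZMod p)) * AddMonoidAlgebra.single g 1 = _
  rw [AddMonoidAlgebra.single_mul_single, zero_add, mul_one]

lemma E_single (g : G) (c : ℤ) :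
    E p (AddMonoidAlgebra.single g c) = AddMonoidAlgebra.single (p • g) c := by
  show AddMonoidAlgebra.mapDomain (psmul p) (AddMonoidAlgebra.single g c) = _
  rw [AddMonoidAlgebra.mapDomain_single]; rfl

lemma ES_single (g : G) (c : ZMod p) :
    ES p (AddMonoidAlgebra.single g c) = AddMonoidAlgebra.single (p • g) c := by
  show AddMonoidAlgebra.mapDomain (psmul p) (AddMonoidAlgebra.single g c) = _
  rw [AddMonoidAlgebra.mapDomain_single]; rfl

lemma red_apply (f : R) (g : G) : (red p f).coeff g = ((f.coeff g : ℤ) : ZMod p) := by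
  induction f using AddMonoidAlgebra.induction_linear with
  | zero => simp
  | add a b ha hb => rw [map_add, AddMonoidAlgebra.coeff_add, AddMonoidAlgebra.coeff_add, Finsupp.add_apply, Finsupp.add_apply, ha, hb, Int.cast_add]
  | single a c =>
    rw [red_single, AddMonoidAlgebra.coeff_single, AddMonoidAlgebra.coeff_single, Finsupp.single_apply, Finsupp.single_apply, apply_ite (Int.cast), Int.cast_zero]

variable [hp : Fact p.Prime]

instance : CharP (S p) p :=
  charP_of_injective_ringHom
    (f := (AddMonoidAlgebra.singleZeroRingHom : ZMod p →+* S p))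
    (AddMonoidAlgebra.single_right_injective (m := (0 : G))) p

lemma frob (s : S p) : s ^ p = ES p s := by
  induction s using AddMonoidAlgebra.induction_linear with
  | zero => rw [map_zero, zero_pow hp.out.ne_zero]
  | add a b ha hb => rw [add_pow_char, map_add, ha, hb]
  | single g c =>
    have h : (AddMonoidAlgebra.single g c : S p) ^ p = ES p (AddMonoidAlgebra.single g c) := by
      rw [AddMonoidAlgebra.single_pow, ZMod.pow_card, ES_single]
    exact h

lemma red_E (f : R) : red p (E p f) = ES p (red p f) := by
  have : (red p).comp (E p) = (ES p).comp (red p) := by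
    apply AddMonoidAlgebra.ringHom_ext <;> intro a <;>
      simp only [RingHom.coe_comp, Function.comp_apply, E_single, red_single, ES_single, smul_zero]
  exact DFunLike.congr_fun this f

lemma coeff_dvd_to_dvd (m : ℤ) (f : R) (h : ∀ g, m ∣ f.coeff g) :
    (AddMonoidAlgebra.single (0 : G) m) ∣ f := by
  refine ⟨AddMonoidAlgebra.ofCoeff (Finsupp.mapRange (fun x => x / m) (Int.zero_ediv m) f.coeff), ?_⟩
  ext g
  rw [AddMonoidAlgebra.coeff_single_zero_mul, AddMonoidAlgebra.coeff_ofCoeff, Finsupp.mapRange_apply,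
    Int.mul_ediv_cancel' (h g)]

lemma key_dvd (f : R) : ((p : ℤ[G]) : R) ∣ f ^ p - E p f := by
  have hz : red p (f ^ p - E p f) = 0 := by
    rw [map_sub, map_pow, red_E, frob, sub_self]
  have hcoeff : ∀ g : G, (p : ℤ) ∣ (f ^ p - E p f).coeff g := by
    intro g
    have hg : (red p (f ^ p - E p f)).coeff g = (0 : S p).coeff g := congrArg (fun x : S p => x.coeff g) hz
    rw [red_apply, AddMonoidAlgebra.coeff_zero, Finsupp.zero_apply] at hg
    exact_mod_cast (ZMod.intCast_zmod_eq_zero_iff_dvd _ p).mp hg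
  have := coeff_dvd_to_dvd ((p : ℤ)) _ hcoeff
  rwa [← AddMonoidAlgebra.natCast_def] at this

lemma E_apply_zero (f : R) (hp0 : p ≠ 0) : (E p f).coeff 0 = f.coeff 0 := by
  have hinj : Function.Injective (psmul p) := by
    intro a b hab
    have h1 : p • a = p • b := hab
    have := congrArg Prod.fst h1
    have h2 := congrArg Prod.snd h1
    simp only [Prod.smul_fst, Prod.smul_snd, nsmul_eq_mul] at this h2
    have hpz : (p : ℤ) ≠ 0 := Int.natCast_ne_zero.mpr hp0
    exact Prod.ext (mul_left_cancel₀ hpz this) (mul_left_cancel₀ hpz h2)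
  have h := Finsupp.mapDomain_apply hinj f.coeff (0 : G)
  rw [map_zero (psmul p)] at h
  exact h

lemma coeff_zero_dvd (m : ℤ) (f : R) (h : (AddMonoidAlgebra.single (0 : G) m) ∣ f) :
    m ∣ f.coeff 0 := by
  obtain ⟨c, rfl⟩ := h
  rw [AddMonoidAlgebra.coeff_single_zero_mul]
  exact Dvd.intro _ rfl

/-- Gauss congruence for constant terms of powers. -/
lemma ct_gauss (A : R) (r : ℕ) (hr : 0 < r) :
    ((p : ℤ)) ^ r ∣ (A ^ p ^ r).coeff 0 - (A ^ p ^ (r - 1)).coeff 0 := by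
  have h1 : ((p : ℤ[G]) : R) ∣ A ^ p - E p A := key_dvd p A
  have h2 := dvd_sub_pow_of_dvd_sub h1 (r - 1)
  rw [Nat.sub_add_cancel hr] at h2
  have e1 : (A ^ p) ^ p ^ (r - 1) = A ^ p ^ r := by
    rw [← pow_mul, ← pow_succ', Nat.sub_add_cancel hr]
  have e2 : (E p A) ^ p ^ (r - 1) = E p (A ^ p ^ (r - 1)) := (map_pow _ _ _).symm
  rw [e1, e2] at h2
  have h3 : (AddMonoidAlgebra.single (0 : G) ((p : ℤ) ^ r)) ∣
      A ^ p ^ r - E p (A ^ p ^ (r - 1)) := by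
    have : ((p : ℤ[G]) : R) ^ r = AddMonoidAlgebra.single (0 : G) ((p : ℤ) ^ r) := by
      rw [AddMonoidAlgebra.natCast_def, AddMonoidAlgebra.single_pow, smul_zero]
    rwa [this] at h2
  have h4 := coeff_zero_dvd _ _ h3
  rwa [AddMonoidAlgebra.coeff_sub, Finsupp.sub_apply, E_apply_zero p _ hp.out.ne_zero] at h4


/-- Constant term of `(Pf - α)^n` is the binomial transform of the Franel numbers. -/
lemma ct_Q_pow (α : ℤ) (n : ℕ) :
    ((Pf + AddMonoidAlgebra.single (0 : G) (-α)) ^ n).coeff 0 = binomialTransform franel α n := by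
  rw [add_pow, binomialTransform, AddMonoidAlgebra.coeff_sum, Finset.sum_apply']
  refine Finset.sum_congr rfl fun k _ => ?_
  rw [AddMonoidAlgebra.single_pow, smul_zero, AddMonoidAlgebra.natCast_def,
    mul_assoc, AddMonoidAlgebra.single_mul_single, zero_add,
    AddMonoidAlgebra.coeff_mul_single_zero, ct_Pf_pow]
  ring

end FranelGauss

/-- The binomial transform of the Franel numbers satisfies the Gauss congruences. -/
theorem franel_binomialTransform_gauss (α : ℤ) :
    ∀ p : ℕ, p.Prime → ∀ n r : ℕ, 0 < n → 0 < r →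
      binomialTransform franel α (n * p ^ r) ≡
        binomialTransform franel α (n * p ^ (r - 1)) [ZMOD (p : ℤ) ^ r] := by
  intro p hp n r hn hr
  haveI : Fact p.Prime := ⟨hp⟩
  set Q : FranelGauss.R := FranelGauss.Pf + AddMonoidAlgebra.single (0 : FranelGauss.G) (-α)
  have key := FranelGauss.ct_gauss p (Q ^ n) r hr
  rw [← pow_mul, ← pow_mul, ← FranelGauss.ct_Q_pow α (n * p ^ r),
    ← FranelGauss.ct_Q_pow α (n * p ^ (r - 1))] at *
  exact (Int.ModEq.symm (Int.modEq_iff_dvd.mpr key))
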